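/- Explicit formula for T₀(p) (Vasiga–Shallit): let p be an odd prime and write p − 1 = 2^e · d with d odd (so d is the odd part of p − 1). Then the number of periodic points of the squaring map f₀(x) = x² on ZMod p equals 1 + d. -/

import Mathlib

open Polynomial

lemma exists_prim (p : ℕ) [Fact p.Prime] (d : ℕ) (hdvd : d ∣ p - 1) :
    ∃ ζ : ZMod p, IsPrimitiveRoot ζ d := by
  obtain ⟨g, hg⟩ := IsCyclic.exists_ofOrder_eq_natCard (α := (ZMod p)ˣ)
  have hcard : Nat.card (ZMod p)ˣ = p - 1 := by
    simp [Nat.card_eq_fintype_card, ZMod.card_units_eq_totient,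
      Nat.totient_prime (Fact.out : p.Prime)]
  obtain ⟨k, hk⟩ := hdvd
  have hp1 : 0 < p - 1 := Nat.sub_pos_of_lt (Fact.out : p.Prime).one_lt
  have hk0 : 0 < k := by
    rcases Nat.eq_zero_or_pos k with h | h
    · subst h; simp at hk; omega
    · exact h
  have hord : orderOf (g ^ k) = d := by
    rw [orderOf_pow, hg, hcard, hk, Nat.gcd_eq_right ⟨d, mul_comm d k⟩,
      Nat.mul_div_cancel _ hk0]
  have : IsPrimitiveRoot (g ^ k) d := hord ▸ IsPrimitiveRoot.orderOf _
  exact ⟨((g ^ k : (ZMod p)ˣ) : ZMod p), IsPrimitiveRoot.coe_units_iff.mpr this⟩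

lemma iter_sq {R : Type*} [Monoid R] (n : ℕ) (x : R) :
    (fun x : R => x ^ 2)^[n] x = x ^ (2 ^ n) := by
  induction n generalizing x with
  | zero => simp
  | succ n ih => rw [Function.iterate_succ_apply, ih, ← pow_mul, pow_succ']

theorem card_periodicPts_sq (p : ℕ) [Fact p.Prime] (hp : p ≠ 2)
    (e d : ℕ) (hd : Odd d) (hpd : p - 1 = 2 ^ e * d) :
    (Function.periodicPts (fun x : ZMod p => x ^ 2)).ncard = 1 + d := by
  have hd0 : 0 < d := hd.pos
  have hdvd : d ∣ p - 1 := hpd ▸ Dvd.intro_left _ rfl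
  obtain ⟨ζ, hζ⟩ := exists_prim p d hdvd
  have hset : Function.periodicPts (fun x : ZMod p => x ^ 2)
      = insert (0 : ZMod p) ↑(nthRootsFinset d (1 : ZMod p)) := by
    ext x
    simp only [Set.mem_insert_iff, Finset.coe_sort_coe, Finset.mem_coe,
      mem_nthRootsFinset hd0 (1 : ZMod p)]
    constructor
    · rintro ⟨n, hn, hx⟩
      have hx' : x ^ (2 ^ n) = x := by
        have := hx.eq
        rwa [iter_sq] at this
      rcases eq_or_ne x 0 with h0 | h0
      · exact Or.inl h0
      · refine Or.inr ?_
        have h1 : x ^ (2 ^ n - 1) = 1 := by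
          have h2 : x ^ (2 ^ n - 1) * x = 1 * x := by
            rw [one_mul, ← pow_succ, Nat.sub_add_cancel Nat.one_le_two_pow, hx']
          exact mul_right_cancel₀ h0 h2
        have hodd : Odd (2 ^ n - 1) :=
          Nat.Even.sub_odd Nat.one_le_two_pow
            (Nat.even_pow.mpr ⟨even_two, hn.ne'⟩) odd_one
        have hdvd1 : orderOf x ∣ 2 ^ n - 1 := orderOf_dvd_of_pow_eq_one h1
        have hoodd : Odd (orderOf x) := hodd.of_dvd_nat hdvd1
        have hdvd2 : orderOf x ∣ p - 1 :=
          orderOf_dvd_of_pow_eq_one (ZMod.pow_card_sub_one_eq_one h0)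
        rw [hpd] at hdvd2
        have hcop : Nat.Coprime (orderOf x) (2 ^ e) :=
          Nat.Coprime.pow_right _
            ((Nat.prime_two.coprime_iff_not_dvd.mpr (by
              have := Nat.odd_iff.mp hoodd; omega)).symm)
        exact orderOf_dvd_iff_pow_eq_one.mp (hcop.dvd_of_dvd_mul_left hdvd2)
    · rintro (h0 | h1)
      · subst h0
        exact ⟨1, one_pos, by
          simp [Function.IsPeriodicPt, Function.IsFixedPt, zero_pow]⟩
      · have hcop : Nat.Coprime 2 d := Nat.prime_two.coprime_iff_not_dvd.mpr (by
          have := Nat.odd_iff.mp hd; omega)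
        have htot : 0 < d.totient := Nat.totient_pos.mpr hd0
        have hmod : 2 ^ d.totient ≡ 1 [MOD d] := Nat.ModEq.pow_totient hcop
        have hdd : d ∣ 2 ^ d.totient - 1 :=
          (Nat.modEq_iff_dvd' Nat.one_le_two_pow).mp hmod.symm
        obtain ⟨k, hk⟩ := hdd
        refine ⟨d.totient, htot, ?_⟩
        show (fun x : ZMod p => x ^ 2)^[d.totient] x = x
        rw [iter_sq, ← Nat.sub_add_cancel (Nat.one_le_two_pow (n := d.totient)),
          pow_succ, hk, pow_mul, h1, one_pow, one_mul]
  rw [hset, Set.ncard_insert_of_notMem, Set.ncard_coe_finset,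
    hζ.card_nthRootsFinset, add_comm]
  simp [mem_nthRootsFinset hd0 (1 : ZMod p), zero_pow hd0.ne']
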